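/- Let q ≥ 3, d ≥ 2, β ∈ [0,1) and α > 1. For any colours c₁, c₂ ∈ [q], there is an (α,c₂)-extremal tuple (p^{(1)},…,p^{(d)}) ∈ Δ_α^d which achieves the maximum of h_{c₁,c₂,β}(p^{(1)},…,p^{(d)}) over Δ_α^d. -/

import Mathlib

open Filter

/-- Weight of a configuration of the `q`-state Potts model with parameter `β`
on the `d`-ary tree of height `n`.  A vertex of the tree is a pair of a depth
`k ≤ n` and a path of length `k`; the parent of a vertex of depth `k+1` is
obtained by dropping the last step of its path.  The weight is
`β ^ (number of monochromatic edges)`. -/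
noncomputable def treeWeight (q d n : ℕ) (β : ℝ)
    (σ : (Σ k : Fin (n + 1), (Fin k → Fin d)) → Fin q) : ℝ :=
  β ^ (Finset.univ.filter (fun p : Σ k : Fin n, (Fin (k + 1) → Fin d) =>
        σ ⟨p.1.succ, p.2⟩ = σ ⟨p.1.castSucc, fun i => p.2 i.castSucc⟩)).card

/-- The conditional probability, under the Gibbs distribution of the `q`-state
Potts model with parameter `β` on the `d`-ary tree `𝕋_{d,n}` of height `n`,
that the root receives colour `c` given that the leaves (the depth-`n`
vertices) are coloured according to `τ`. -/
noncomputable def condRootProb (q d n : ℕ) (β : ℝ)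
    (τ : (Fin n → Fin d) → Fin q) (c : Fin q) : ℝ :=
  (∑ σ ∈ Finset.univ.filter
      (fun σ : (Σ k : Fin (n + 1), (Fin k → Fin d)) → Fin q =>
        σ ⟨⟨0, n.succ_pos⟩, Fin.elim0⟩ = c ∧
          ∀ f : Fin n → Fin d, σ ⟨⟨n, n.lt_succ_self⟩, f⟩ = τ f),
      treeWeight q d n β σ) /
  (∑ σ ∈ Finset.univ.filter
      (fun σ : (Σ k : Fin (n + 1), (Fin k → Fin d)) → Fin q =>
        ∀ f : Fin n → Fin d, σ ⟨⟨n, n.lt_succ_self⟩, f⟩ = τ f),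
      treeWeight q d n β σ)

/-- `γ(q,β,d,n)`: the maximum, over boundary configurations `τ` and colours
`c₁, c₂`, of the ratio of conditional root marginals. -/
noncomputable def pottsGamma (q d : ℕ) (β : ℝ) (n : ℕ) : ℝ :=
  ⨆ τ : (Fin n → Fin d) → Fin q, ⨆ c₁ : Fin q, ⨆ c₂ : Fin q,
    condRootProb q d n β τ c₁ / condRootProb q d n β τ c₂

/-- The function `g_{c₁,c₂,β}` of the two-step recursion. -/
noncomputable def gfun (q d : ℕ) (β : ℝ) (c₁ c₂ : Fin q) (p : Fin d → Fin q → ℝ) : ℝ :=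
  ∏ k : Fin d,
    (1 - ((1 - β) * (p k c₁ - p k c₂)) /
      (β * p k c₂ + ∑ c ∈ Finset.univ.erase c₂, p k c))

/-- The function `h_{c₁,c₂,β}` of the two-step recursion. -/
noncomputable def hfun (q d : ℕ) (β : ℝ) (c₁ c₂ : Fin q) (p : Fin d → Fin q → ℝ) : ℝ :=
  1 + ((1 - β) * (1 - gfun q d β c₁ c₂ p)) /
    (β + ∑ c ∈ Finset.univ.erase c₂, gfun q d β c c₂ p)

/-- `Δ_α`: probability vectors on `q` colours whose entries are within a
factor `α` of each other. -/
def simplexAlpha (q : ℕ) (α : ℝ) : Set (Fin q → ℝ) :=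
  {p | (∀ i, 0 ≤ p i) ∧ (∑ i, p i) = 1 ∧ ∀ i j, p i ≤ α * p j}

/-- `M_{α,c₁,c₂,β}`: the maximum of `h_{c₁,c₂,β}` over `Δ_α^d`. -/
noncomputable def Mval (q d : ℕ) (α β : ℝ) (c₁ c₂ : Fin q) : ℝ :=
  sSup ((hfun q d β c₁ c₂) '' {p | ∀ k, p k ∈ simplexAlpha q α})

/-- `Ex_c(α)`: vectors with entries in `{1, α}`, whose `c`-entry is `1`
and with at least one entry equal to `α`. -/
def exSet (q : ℕ) (c : Fin q) (α : ℝ) : Set (Fin q → ℝ) :=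
  {p | (∀ c', p c' = 1 ∨ p c' = α) ∧ p c = 1 ∧ ∃ c', p c' = α}

/-- The function `f_u(d,β,x,y)` from the one-step analysis. -/
noncomputable def fU (d : ℕ) (β x y : ℝ) : ℝ :=
  (1 - (1 - β) * y) ^ d /
    ((1 - (1 - β) * y) ^ d +
      2 * (1 - (1 - β) * x) ^ ((d : ℝ) / 2) *
        (1 - (1 - β) * (1 - x - y)) ^ ((d : ℝ) / 2))

/-- The function `f_ℓ(d,β,x,y)` from the one-step analysis. -/
noncomputable def fL (d : ℕ) (β x y : ℝ) : ℝ :=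
  (1 - (1 - β) * x) ^ d /
    ((1 - (1 - β) * x) ^ d + (1 - (1 - β) * y) ^ d +
      (1 - (1 - β) * (1 - x - y)) ^ d)

/-- The pair of sequences `(u_n(d,β), ℓ_n(d,β))`, defined by
`u_0 = 1`, `ℓ_0 = 0`, `u_{n+1} = f_u(d,β,u_n,ℓ_n)`, `ℓ_{n+1} = f_ℓ(d,β,u_n,ℓ_n)`. -/
noncomputable def ulSeq (d : ℕ) (β : ℝ) : ℕ → ℝ × ℝ
  | 0 => (1, 0)
  | n + 1 =>
      (fU d β (ulSeq d β n).1 (ulSeq d β n).2,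
       fL d β (ulSeq d β n).1 (ulSeq d β n).2)

open Finset in
noncomputable def PwVert (q : ℕ) (α : ℝ) (S : Finset (Fin q)) : Fin q → ℝ :=
  fun c => if c ∈ S then α / ((q : ℝ) + (α - 1) * S.card) else 1 / ((q : ℝ) + (α - 1) * S.card)

noncomputable def PwW (β : ℝ) {q : ℕ} (v : Fin q → ℝ) : Fin q → ℝ := fun c => 1 - (1 - β) * v c

noncomputable def PwN (β : ℝ) {q : ℕ} (c₁ c₂ : Fin q) (A w : Fin q → ℝ) : ℝ :=
  (1 - β) * (A c₂ * w c₂ - A c₁ * w c₁)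

open Finset in
noncomputable def PwD (β : ℝ) {q : ℕ} (c₂ : Fin q) (A w : Fin q → ℝ) : ℝ :=
  β * (A c₂ * w c₂) + ∑ c ∈ Finset.univ.erase c₂, A c * w c

section PwLemmas
open Finset
variable {q : ℕ} {α β : ℝ}

lemma Pw.sigma_pos (hq : 3 ≤ q) (hα : 1 < α) (S : Finset (Fin q)) :
    0 < (q : ℝ) + (α - 1) * S.card := by
  have h1 : (3 : ℝ) ≤ (q : ℝ) := by exact_mod_cast hq
  have h2 : (0 : ℝ) ≤ (S.card : ℝ) := by positivity
  nlinarith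

lemma Pw.vert_sum (hq : 3 ≤ q) (hα : 1 < α) (S : Finset (Fin q)) :
    ∑ c, PwVert q α S c = 1 := by
  have hσ := Pw.sigma_pos hq hα S
  have hcard : S.card ≤ q := by simpa using Finset.card_le_card (Finset.subset_univ S)
  rw [← Finset.sum_filter_add_sum_filter_not Finset.univ (· ∈ S)]
  have h1 : Finset.univ.filter (· ∈ S) = S := by ext c; simp
  have h2 : (Finset.univ.filter (¬ · ∈ S)).card = q - S.card := by
    rw [Finset.filter_not, h1]; simp [Finset.card_sdiff_of_subset (Finset.subset_univ S)]
  have ha : ∀ c ∈ Finset.univ.filter (· ∈ S), PwVert q α S c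
      = α / ((q : ℝ) + (α - 1) * S.card) := by
    intro c hc
    have : c ∈ S := by simpa using (Finset.mem_filter.mp hc).2
    simp [PwVert, this]
  have hb : ∀ c ∈ Finset.univ.filter (¬ · ∈ S), PwVert q α S c
      = 1 / ((q : ℝ) + (α - 1) * S.card) := by
    intro c hc
    have : c ∉ S := by simpa using (Finset.mem_filter.mp hc).2
    simp [PwVert, this]
  rw [Finset.sum_congr rfl ha, Finset.sum_congr rfl hb, Finset.sum_const, Finset.sum_const,
    h1, h2, nsmul_eq_mul, nsmul_eq_mul]
  have hc2 : ((q - S.card : ℕ) : ℝ) = (q : ℝ) - S.card := by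
    push_cast [Nat.cast_sub hcard]; ring
  rw [hc2]
  have hx := hσ.ne'
  calc _ = ((q : ℝ) + (α - 1) * S.card) / ((q : ℝ) + (α - 1) * S.card) := by ring
    _ = 1 := div_self hx

lemma Pw.vert_mem (hq : 3 ≤ q) (hα : 1 < α) (S : Finset (Fin q)) :
    PwVert q α S ∈ simplexAlpha q α := by
  have hσ := Pw.sigma_pos hq hα S
  refine ⟨fun i => ?_, Pw.vert_sum hq hα S, fun i j => ?_⟩
  · unfold PwVert; split <;> positivity
  · unfold PwVert
    have key : ∀ x y : ℝ, x ≤ α * y →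
        x / ((q : ℝ) + (α - 1) * S.card) ≤ α * (y / ((q : ℝ) + (α - 1) * S.card)) := by
      intro x y h
      rw [← mul_div_assoc]
      exact (div_le_div_iff_of_pos_right hσ).mpr h
    split <;> split <;> apply key <;> nlinarith

lemma Pw.lt_one (hq : 3 ≤ q) (hα : 1 < α) {v : Fin q → ℝ}
    (hv : v ∈ simplexAlpha q α) (c : Fin q) : v c < 1 := by
  obtain ⟨h0, h1, hr⟩ := hv
  by_contra h
  push_neg at h
  have hle : v c ≤ 1 := by
    have := Finset.sum_erase_add Finset.univ v (Finset.mem_univ c)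
    have hnn : 0 ≤ ∑ x ∈ Finset.univ.erase c, v x :=
      Finset.sum_nonneg fun i _ => h0 i
    nlinarith [this, h1]
  have hc1 : v c = 1 := le_antisymm hle h
  have hsum0 : ∑ x ∈ Finset.univ.erase c, v x = 0 := by
    have := Finset.sum_erase_add Finset.univ v (Finset.mem_univ c)
    rw [h1, hc1] at this; linarith
  haveI : Nontrivial (Fin q) := Fin.nontrivial_iff_two_le.mpr (by omega)
  obtain ⟨j, hj⟩ := exists_ne c
  have hj0 : v j = 0 := by
    have := (Finset.sum_eq_zero_iff_of_nonneg (fun i _ => h0 i)).mp hsum0 j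
      (Finset.mem_erase.mpr ⟨hj, Finset.mem_univ j⟩)
    exact this
  have := hr c j
  rw [hc1, hj0] at this
  linarith

lemma Pw.w_pos (hq : 3 ≤ q) (hα : 1 < α) (hβ0 : 0 ≤ β) (hβ1 : β < 1) {v : Fin q → ℝ}
    (hv : v ∈ simplexAlpha q α) (c : Fin q) : 0 < PwW β v c := by
  have h1 := Pw.lt_one hq hα hv c
  have h0 := hv.1 c
  unfold PwW
  nlinarith

lemma Pw.w_affine {t s : ℝ} (hts : t + s = 1) (v₁ v₂ : Fin q → ℝ) (c : Fin q) :
    PwW β (fun i => t * v₁ i + s * v₂ i) c = t * PwW β v₁ c + s * PwW β v₂ c := by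
  unfold PwW; linear_combination (-1 : ℝ) * hts
end PwLemmas
section PwLemmas2
open Finset
variable {q d : ℕ} {α β : ℝ}

lemma Pw.mediant2 (n₁ n₂ d₁ d₂ t s : ℝ) (ht : 0 ≤ t) (hs : 0 ≤ s) (hts : t + s = 1)
    (h₁ : 0 < d₁) (h₂ : 0 < d₂) :
    (t * n₁ + s * n₂) / (t * d₁ + s * d₂) ≤ max (n₁ / d₁) (n₂ / d₂) := by
  have hd : 0 < t * d₁ + s * d₂ := by
    rcases le_or_gt t 0 with h | h
    · have ht0 : t = 0 := le_antisymm h ht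
      have hs1 : s = 1 := by linarith
      rw [ht0, hs1]; linarith
    · nlinarith [mul_pos h h₁, mul_nonneg hs h₂.le]
  rw [div_le_iff₀ hd]
  have e₁ : n₁ ≤ (max (n₁ / d₁) (n₂ / d₂)) * d₁ := by
    rw [← div_le_iff₀ h₁]; exact le_max_left _ _
  have e₂ : n₂ ≤ (max (n₁ / d₁) (n₂ / d₂)) * d₂ := by
    rw [← div_le_iff₀ h₂]; exact le_max_right _ _
  nlinarith

lemma Pw.N_lin (c₁ c₂ : Fin q) (A : Fin q → ℝ) (t s : ℝ) (w₁ w₂ : Fin q → ℝ) :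
    PwN β c₁ c₂ A (fun c => t * w₁ c + s * w₂ c)
      = t * PwN β c₁ c₂ A w₁ + s * PwN β c₁ c₂ A w₂ := by
  unfold PwN; ring

lemma Pw.D_lin (c₂ : Fin q) (A : Fin q → ℝ) (t s : ℝ) (w₁ w₂ : Fin q → ℝ) :
    PwD β c₂ A (fun c => t * w₁ c + s * w₂ c)
      = t * PwD β c₂ A w₁ + s * PwD β c₂ A w₂ := by
  unfold PwD
  have : ∀ c ∈ Finset.univ.erase c₂, A c * (t * w₁ c + s * w₂ c)
      = t * (A c * w₁ c) + s * (A c * w₂ c) := fun c _ => by ring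
  rw [Finset.sum_congr rfl this, Finset.sum_add_distrib, ← Finset.mul_sum, ← Finset.mul_sum]
  ring

lemma Pw.D_pos (hq : 3 ≤ q) (hβ0 : 0 ≤ β) (c₂ : Fin q) {A w : Fin q → ℝ}
    (hA : ∀ c, 0 < A c) (hw : ∀ c, 0 < w c) : 0 < PwD β c₂ A w := by
  haveI : Nontrivial (Fin q) := Fin.nontrivial_iff_two_le.mpr (by omega)
  obtain ⟨j, hj⟩ := exists_ne c₂
  have hsum : 0 < ∑ c ∈ Finset.univ.erase c₂, A c * w c :=
    Finset.sum_pos (fun c _ => mul_pos (hA c) (hw c))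
      ⟨j, Finset.mem_erase.mpr ⟨hj, Finset.mem_univ j⟩⟩
  have : 0 ≤ β * (A c₂ * w c₂) := mul_nonneg hβ0 (mul_pos (hA c₂) (hw c₂)).le
  unfold PwD; linarith

/-- the per-coordinate factor identity -/
lemma Pw.factor_eq (hq : 3 ≤ q) (hα : 1 < α) (hβ0 : 0 ≤ β) (hβ1 : β < 1)
    {u : Fin q → ℝ} (hu : u ∈ simplexAlpha q α) (c c₂ : Fin q) :
    1 - ((1 - β) * (u c - u c₂)) / (β * u c₂ + ∑ c' ∈ Finset.univ.erase c₂, u c')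
      = PwW β u c / PwW β u c₂ := by
  have hsum : ∑ c' ∈ Finset.univ.erase c₂, u c' = 1 - u c₂ := by
    have := Finset.sum_erase_add Finset.univ u (Finset.mem_univ c₂)
    rw [hu.2.1] at this; linarith
  have hden : β * u c₂ + ∑ c' ∈ Finset.univ.erase c₂, u c' = PwW β u c₂ := by
    rw [hsum]; unfold PwW; ring
  rw [hden]
  have hpos := Pw.w_pos hq hα hβ0 hβ1 hu c₂
  field_simp
  unfold PwW; ring

lemma Pw.gfun_update (hq : 3 ≤ q) (hα : 1 < α) (hβ0 : 0 ≤ β) (hβ1 : β < 1)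
    (c c₂ : Fin q) (p : Fin d → Fin q → ℝ) (k : Fin d)
    (hp : ∀ k', k' ≠ k → p k' ∈ simplexAlpha q α)
    {v : Fin q → ℝ} (hv : v ∈ simplexAlpha q α) :
    gfun q d β c c₂ (Function.update p k v)
      = ((∏ k' ∈ Finset.univ.erase k, PwW β (p k') c) * PwW β v c)
        / ((∏ k' ∈ Finset.univ.erase k, PwW β (p k') c₂) * PwW β v c₂) := by
  unfold gfun
  have hmem : ∀ k', Function.update p k v k' ∈ simplexAlpha q α := by
    intro k'
    rcases eq_or_ne k' k with rfl | h
    · rw [Function.update_self]; exact hv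
    · rw [Function.update_of_ne h]; exact hp k' h
  have hfac : ∀ k' ∈ (Finset.univ : Finset (Fin d)),
      1 - ((1 - β) * (Function.update p k v k' c - Function.update p k v k' c₂)) /
        (β * Function.update p k v k' c₂ + ∑ c' ∈ Finset.univ.erase c₂, Function.update p k v k' c')
      = PwW β (Function.update p k v k') c / PwW β (Function.update p k v k') c₂ :=
    fun k' _ => Pw.factor_eq hq hα hβ0 hβ1 (hmem k') c c₂
  rw [Finset.prod_congr rfl hfac, Finset.prod_div_distrib]
  congr 1
  · rw [← Finset.mul_prod_erase Finset.univ _ (Finset.mem_univ k), Function.update_self,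
      Finset.prod_congr rfl (fun k' hk' => by
        rw [Function.update_of_ne (Finset.mem_erase.mp hk').1])]
    ring
  · rw [← Finset.mul_prod_erase Finset.univ _ (Finset.mem_univ k), Function.update_self,
      Finset.prod_congr rfl (fun k' hk' => by
        rw [Function.update_of_ne (Finset.mem_erase.mp hk').1])]
    ring

lemma Pw.hfun_update (hq : 3 ≤ q) (hα : 1 < α) (hβ0 : 0 ≤ β) (hβ1 : β < 1)
    (c₁ c₂ : Fin q) (p : Fin d → Fin q → ℝ) (k : Fin d)
    (hp : ∀ k', k' ≠ k → p k' ∈ simplexAlpha q α)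
    {v : Fin q → ℝ} (hv : v ∈ simplexAlpha q α) :
    hfun q d β c₁ c₂ (Function.update p k v)
      = 1 + PwN β c₁ c₂ (fun c => ∏ k' ∈ Finset.univ.erase k, PwW β (p k') c) (PwW β v)
          / PwD β c₂ (fun c => ∏ k' ∈ Finset.univ.erase k, PwW β (p k') c) (PwW β v) := by
  set A : Fin q → ℝ := fun c => ∏ k' ∈ Finset.univ.erase k, PwW β (p k') c with hA
  have hApos : ∀ c, 0 < A c :=
    fun c => Finset.prod_pos (fun k' hk' =>
      Pw.w_pos hq hα hβ0 hβ1 (hp k' (Finset.mem_erase.mp hk').1) c)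
  have hwpos : ∀ c, 0 < PwW β v c := Pw.w_pos hq hα hβ0 hβ1 hv
  have hg : ∀ c, gfun q d β c c₂ (Function.update p k v)
      = (A c * PwW β v c) / (A c₂ * PwW β v c₂) :=
    fun c => Pw.gfun_update hq hα hβ0 hβ1 c c₂ p k hp hv
  unfold hfun
  rw [hg c₁, Finset.sum_congr rfl (fun c _ => hg c)]
  have hY : 0 < A c₂ * PwW β v c₂ := mul_pos (hApos c₂) (hwpos c₂)
  have hsum : ∑ c ∈ Finset.univ.erase c₂, (A c * PwW β v c) / (A c₂ * PwW β v c₂)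
      = (∑ c ∈ Finset.univ.erase c₂, A c * PwW β v c) / (A c₂ * PwW β v c₂) := by
    rw [Finset.sum_div]
  rw [hsum]
  have hZ : 0 < ∑ c ∈ Finset.univ.erase c₂, A c * PwW β v c := by
    haveI : Nontrivial (Fin q) := Fin.nontrivial_iff_two_le.mpr (by omega)
    obtain ⟨j, hj⟩ := exists_ne c₂
    exact Finset.sum_pos (fun c _ => mul_pos (hApos c) (hwpos c))
      ⟨j, Finset.mem_erase.mpr ⟨hj, Finset.mem_univ j⟩⟩
  have hD : 0 < PwD β c₂ A (PwW β v) := Pw.D_pos hq hβ0 c₂ hApos hwpos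
  have hD2 : 0 < β + (∑ c ∈ Finset.univ.erase c₂, A c * PwW β v c) / (A c₂ * PwW β v c₂) := by
    have := div_pos hZ hY
    linarith
  have hDne : PwD β c₂ A (PwW β v) ≠ 0 := hD.ne'
  congr 1
  unfold PwN PwD
  unfold PwD at hDne
  rw [div_eq_div_iff hD2.ne' hDne]
  have hYne := hY.ne'
  have hA2 := (hApos c₂).ne'
  have hW2 := (hwpos c₂).ne'
  field_simp

end PwLemmas2
section PwLemmas3
open Finset
variable {q : ℕ} {α β : ℝ}

lemma Pw.ratio_convex (c₁ c₂ : Fin q) (A : Fin q → ℝ) {t s : ℝ} (ht : 0 ≤ t) (hs : 0 ≤ s)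
    (hts : t + s = 1) {v v₁ v₂ : Fin q → ℝ} (hid : ∀ i, v i = t * v₁ i + s * v₂ i)
    (hd₁ : 0 < PwD β c₂ A (PwW β v₁)) (hd₂ : 0 < PwD β c₂ A (PwW β v₂)) :
    PwN β c₁ c₂ A (PwW β v) / PwD β c₂ A (PwW β v)
      ≤ max (PwN β c₁ c₂ A (PwW β v₁) / PwD β c₂ A (PwW β v₁))
          (PwN β c₁ c₂ A (PwW β v₂) / PwD β c₂ A (PwW β v₂)) := by
  have hw : PwW β v = fun c => t * PwW β v₁ c + s * PwW β v₂ c := by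
    funext c
    have hv : v = fun i => t * v₁ i + s * v₂ i := funext hid
    rw [hv]
    exact Pw.w_affine hts v₁ v₂ c
  rw [hw, Pw.N_lin, Pw.D_lin]
  exact Pw.mediant2 _ _ _ _ t s ht hs hts hd₁ hd₂

set_option maxHeartbeats 2000000 in
lemma Pw.coord_bound (hq : 3 ≤ q) (hα : 1 < α) (hβ0 : 0 ≤ β) (hβ1 : β < 1)
    (c₁ c₂ : Fin q) {A : Fin q → ℝ} (hA : ∀ c, 0 < A c) :
    ∀ n : ℕ, ∀ v : Fin q → ℝ, (Finset.image v Finset.univ).card ≤ n + 1 →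
      v ∈ simplexAlpha q α →
      ∃ S : Finset (Fin q), S.Nonempty ∧ S ≠ Finset.univ ∧
        PwN β c₁ c₂ A (PwW β v) / PwD β c₂ A (PwW β v)
          ≤ PwN β c₁ c₂ A (PwW β (PwVert q α S)) / PwD β c₂ A (PwW β (PwVert q α S)) := by
  have hα1 : (0:ℝ) < α - 1 := by linarith
  have hQ3 : (3:ℝ) ≤ (q:ℝ) := by exact_mod_cast hq
  have hDvert : ∀ S : Finset (Fin q), 0 < PwD β c₂ A (PwW β (PwVert q α S)) :=
    fun S => Pw.D_pos hq hβ0 c₂ hA (Pw.w_pos hq hα hβ0 hβ1 (Pw.vert_mem hq hα S))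
  intro n
  induction n with
  | zero =>
    intro v hcard hv
    obtain ⟨hv0, hv1, hvr⟩ := hv
    have heq : ∀ i j : Fin q, v i = v j := fun i j =>
      Finset.card_le_one.mp hcard _ (Finset.mem_image_of_mem v (Finset.mem_univ i)) _
        (Finset.mem_image_of_mem v (Finset.mem_univ j))
    have hvi : ∀ i, v i = 1 / (q : ℝ) := by
      intro i
      have hsum : ∑ j, v j = (q : ℝ) * v i := by
        rw [Finset.sum_congr rfl (fun j _ => heq j i), Finset.sum_const, Finset.card_univ,
          Fintype.card_fin, nsmul_eq_mul]
      rw [hv1] at hsum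
      field_simp
      linarith
    set S₁ : Finset (Fin q) := {c₂} with hS₁
    set S₂ : Finset (Fin q) := {c₂}ᶜ with hS₂
    have hcard₁ : ((S₁.card : ℕ) : ℝ) = 1 := by simp [hS₁]
    have hcard₂ : ((S₂.card : ℕ) : ℝ) = (q:ℝ) - 1 := by
      have h' : S₂.card = q - 1 := by simp [hS₂, Finset.card_compl]
      rw [h']
      push_cast [Nat.cast_sub (by omega : 1 ≤ q)]
      ring
    set σ₁ : ℝ := (q:ℝ) + (α - 1) with hσ₁
    set σ₂ : ℝ := (q:ℝ) + (α - 1) * ((q:ℝ) - 1) with hσ₂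
    have hσ₁pos : 0 < σ₁ := by nlinarith
    have hσ₂pos : 0 < σ₂ := by nlinarith
    have hσsum : σ₁ + σ₂ = (q:ℝ) * (1 + α) := by rw [hσ₁, hσ₂]; ring
    have hσsumpos : 0 < σ₁ + σ₂ := by positivity
    set t : ℝ := σ₁ / (σ₁ + σ₂) with hts
    have ht0 : 0 ≤ t := by positivity
    have ht1 : 0 ≤ 1 - t := by
      rw [hts, sub_nonneg, div_le_one hσsumpos]; linarith
    have h1t : 1 - t = σ₂ / (σ₁ + σ₂) := by
      rw [hts]; field_simp; ring
    have hvert₁ : ∀ i, PwVert q α S₁ i = if i ∈ S₁ then α / σ₁ else 1 / σ₁ := by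
      intro i; unfold PwVert; rw [hcard₁, hσ₁]; norm_num
    have hvert₂ : ∀ i, PwVert q α S₂ i = if i ∈ S₂ then α / σ₂ else 1 / σ₂ := by
      intro i; unfold PwVert; rw [hcard₂, hσ₂]
    have hid : ∀ i, v i = t * PwVert q α S₁ i + (1 - t) * PwVert q α S₂ i := by
      intro i
      rw [hvi i, hvert₁ i, hvert₂ i, h1t, hts]
      by_cases hi : i = c₂
      · have h1 : i ∈ S₁ := by simp [hS₁, hi]
        have h2 : i ∉ S₂ := by simp [hS₂, hi]
        rw [if_pos h1, if_neg h2, hσsum]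
        have hqne : (q:ℝ) ≠ 0 := by linarith
        field_simp
        ring
      · have h1 : i ∉ S₁ := by simp [hS₁, hi]
        have h2 : i ∈ S₂ := by simp [hS₂, hi]
        rw [if_neg h1, if_pos h2, hσsum]
        have hqne : (q:ℝ) ≠ 0 := by linarith
        field_simp
    have hmax := Pw.ratio_convex c₁ c₂ A ht0 ht1 (by ring) hid (hDvert S₁) (hDvert S₂)
    have hS₁ne : S₁.Nonempty := ⟨c₂, by simp [hS₁]⟩
    have hS₂ne : S₂.Nonempty := by
      rw [← Finset.card_pos]
      have h' : S₂.card = q - 1 := by simp [hS₂, Finset.card_compl]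
      omega
    have hS₁univ : S₁ ≠ Finset.univ := by
      intro h
      have := congrArg Finset.card h
      simp [hS₁, Finset.card_univ] at this
      omega
    have hS₂univ : S₂ ≠ Finset.univ := by
      intro h
      have : c₂ ∈ S₂ := h ▸ Finset.mem_univ c₂
      simp [hS₂] at this
    rcases le_max_iff.mp hmax with h | h
    · exact ⟨S₁, hS₁ne, hS₁univ, h⟩
    · exact ⟨S₂, hS₂ne, hS₂univ, h⟩
  | succ n ih =>
    intro v hcard hv
    by_cases hle : (Finset.image v Finset.univ).card ≤ n + 1
    · exact ih v hle hv
    push_neg at hle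
    obtain ⟨hv0, hv1, hvr⟩ := hv
    set I : Finset ℝ := Finset.image v Finset.univ with hI
    clear_value I
    have hq0' : 0 < q := by omega
    have hvI : ∀ i, v i ∈ I := fun i => by
      rw [hI]; exact Finset.mem_image_of_mem v (Finset.mem_univ i)
    have hIv : ∀ x ∈ I, ∃ i, v i = x := by
      intro x hx
      rw [hI] at hx
      obtain ⟨i, _, h⟩ := Finset.mem_image.mp hx
      exact ⟨i, h⟩
    have hIne : I.Nonempty := ⟨v ⟨0, hq0'⟩, hvI _⟩
    set M : ℝ := I.max' hIne with hM
    clear_value M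
    have hIM : M ∈ I := by rw [hM]; exact I.max'_mem hIne
    have hcard2 : 2 ≤ I.card := by omega
    have hIerne : (I.erase M).Nonempty := by
      rw [← Finset.card_pos, Finset.card_erase_of_mem hIM]; omega
    set M' : ℝ := (I.erase M).max' hIerne with hM'
    clear_value M'
    have hM'mem : M' ∈ I.erase M := by rw [hM']; exact (I.erase M).max'_mem hIerne
    have hM'I : M' ∈ I := Finset.mem_of_mem_erase hM'mem
    have hM'leM : M' ≤ M := by rw [hM]; exact I.le_max' _ hM'I
    have hM'ltM : M' < M := lt_of_le_of_ne hM'leM (Finset.mem_erase.mp hM'mem).1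
    set m : ℝ := I.min' hIne with hm
    clear_value m
    have hmle : ∀ i, m ≤ v i := fun i => by rw [hm]; exact I.min'_le _ (hvI i)
    have hleM : ∀ i, v i ≤ M := fun i => by rw [hM]; exact I.le_max' _ (hvI i)
    have hmm' : m ≤ M' := by rw [hm]; exact I.min'_le _ hM'I
    have hMαm : M ≤ α * m := by
      obtain ⟨iM, hiM⟩ := hIv M hIM
      obtain ⟨jm, hjm⟩ := hIv m (by rw [hm]; exact I.min'_mem hIne)
      calc M = v iM := hiM.symm
        _ ≤ α * v jm := hvr iM jm
        _ = α * m := by rw [hjm]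
    have hvM' : ∀ i, v i ≠ M → v i ≤ M' := by
      intro i hne
      rw [hM']
      exact (I.erase M).le_max' _ (Finset.mem_erase.mpr ⟨hne, hvI i⟩)
    set c : ℝ := (M - M') / (α - 1) with hc
    clear_value c
    have hcpos : 0 < c := by rw [hc]; exact div_pos (by linarith) hα1
    have hαc : (α - 1) * c = M - M' := by rw [hc]; field_simp
    have hcm : c ≤ m := by
      rw [hc, div_le_iff₀ hα1]; nlinarith
    set S : Finset (Fin q) := Finset.univ.filter (fun i => v i = M) with hS
    have hmemS : ∀ i, i ∈ S ↔ v i = M := by intro i; rw [hS]; simp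
    clear_value S
    have hσpos := Pw.sigma_pos hq hα S
    set σ : ℝ := (q:ℝ) + (α - 1) * S.card with hσ
    clear_value σ
    have hSne : S.Nonempty := by
      obtain ⟨iM, hiM⟩ := hIv M hIM
      exact ⟨iM, (hmemS iM).mpr hiM⟩
    have hSuniv : S ≠ Finset.univ := by
      obtain ⟨j, hj⟩ := hIv M' hM'I
      intro h
      have : j ∈ S := h ▸ Finset.mem_univ j
      have : v j = M := (hmemS j).mp this
      rw [hj] at this
      exact absurd this hM'ltM.ne
    set t : ℝ := c * σ with ht
    clear_value t
    set u : Fin q → ℝ := fun i => v i - (if i ∈ S then α * c else c) with hu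
    clear_value u
    have huS : ∀ i ∈ S, u i = M' - c := by
      intro i hi
      have hvim : v i = M := (hmemS i).mp hi
      rw [hu]
      simp only [if_pos hi, hvim]
      nlinarith [hαc]
    have huNS : ∀ i, i ∉ S → u i = v i - c := by
      intro i hi; rw [hu]; simp only [if_neg hi]
    have hu_leM' : ∀ i, u i ≤ M' - c := by
      intro i
      by_cases hi : i ∈ S
      · rw [huS i hi]
      · rw [huNS i hi]
        have : v i ≠ M := fun h => hi ((hmemS i).mpr h)
        have := hvM' i this
        linarith
    have hu_ge : ∀ i, m - c ≤ u i := by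
      intro i
      by_cases hi : i ∈ S
      · rw [huS i hi]; linarith
      · rw [huNS i hi]; have := hmle i; linarith
    have hu0 : ∀ i, 0 ≤ u i := fun i => le_trans (by linarith) (hu_ge i)
    have hcardS : S.card ≤ q := by simpa using Finset.card_le_card (Finset.subset_univ S)
    have hsum_ite : ∑ i, (if i ∈ S then α * c else c) = σ * c := by
      rw [← Finset.sum_filter_add_sum_filter_not Finset.univ (· ∈ S)]
      have h1 : Finset.univ.filter (· ∈ S) = S := by ext i; simp
      have h2 : (Finset.univ.filter (¬ · ∈ S)).card = q - S.card := by
        rw [Finset.filter_not, h1]; simp [Finset.card_sdiff_of_subset (Finset.subset_univ S)]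
      have ha : ∀ i ∈ Finset.univ.filter (· ∈ S), (if i ∈ S then α * c else c) = α * c := by
        intro i hi
        have : i ∈ S := by simpa using (Finset.mem_filter.mp hi).2
        rw [if_pos this]
      have hb : ∀ i ∈ Finset.univ.filter (¬ · ∈ S), (if i ∈ S then α * c else c) = c := by
        intro i hi
        have : i ∉ S := by simpa using (Finset.mem_filter.mp hi).2
        rw [if_neg this]
      rw [Finset.sum_congr rfl ha, Finset.sum_congr rfl hb, Finset.sum_const, Finset.sum_const,
        h1, h2, nsmul_eq_mul, nsmul_eq_mul]
      have hc2 : ((q - S.card : ℕ) : ℝ) = (q : ℝ) - S.card := by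
        push_cast [Nat.cast_sub hcardS]; ring
      rw [hc2, hσ]
      ring
    have hsum_u : ∑ i, u i = 1 - t := by
      have : ∀ i ∈ Finset.univ, u i = v i - (if i ∈ S then α * c else c) := by
        intro i _; rw [hu]
      rw [Finset.sum_congr rfl this, Finset.sum_sub_distrib, hv1, hsum_ite, ht]
      ring
    have ht0 : 0 ≤ t := by rw [ht]; exact mul_nonneg hcpos.le hσpos.le
    have ht_le : t ≤ 1 := by
      have : 0 ≤ ∑ i, u i := Finset.sum_nonneg (fun i _ => hu0 i)
      linarith [hsum_u]
    by_cases htone : t = 1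
    · -- v is exactly the vertex of S
      have hsum0 : ∑ i, u i = 0 := by rw [hsum_u, htone]; ring
      have huz : ∀ i, u i = 0 := by
        intro i
        exact (Finset.sum_eq_zero_iff_of_nonneg (fun j _ => hu0 j)).mp hsum0 i (Finset.mem_univ i)
      have hcσ : c = 1 / σ := by
        rw [eq_div_iff hσpos.ne']
        rw [ht] at htone; linarith
      have hveq : v = PwVert q α S := by
        funext i
        unfold PwVert
        rw [← hσ]
        by_cases hi : i ∈ S
        · rw [if_pos hi]
          have h1 : u i = M' - c := huS i hi
          have h2 : u i = 0 := huz i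
          have h3 : v i = M := (hmemS i).mp hi
          have h5 : M = α * c := by linarith [hαc]
          rw [h3, h5, hcσ]
          ring
        · rw [if_neg hi]
          have h1 : u i = v i - c := huNS i hi
          have h2 : u i = 0 := huz i
          rw [← hcσ]
          linarith
      exact ⟨S, hSne, hSuniv, by rw [hveq]⟩
    · have htlt : t < 1 := lt_of_le_of_ne ht_le htone
      have h1t : 0 < 1 - t := by linarith
      obtain ⟨v'', hv''app⟩ : ∃ v'' : Fin q → ℝ, ∀ i, v'' i = u i / (1 - t) :=
        ⟨fun i => u i / (1 - t), fun _ => rfl⟩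
      have hid : ∀ i, v i = t * PwVert q α S i + (1 - t) * v'' i := by
        intro i
        have hv''i : v'' i = u i / (1 - t) := hv''app i
        have hcancel : (1 - t) * (u i / (1 - t)) = u i := by
          field_simp
        unfold PwVert
        rw [← hσ, hv''i, hcancel]
        by_cases hi : i ∈ S
        · rw [if_pos hi, huS i hi]
          have h3 : v i = M := (hmemS i).mp hi
          have h4 : t * (α / σ) = c * α := by
            rw [ht]
            calc c * σ * (α / σ) = c * α * (σ / σ) := by ring
              _ = c * α := by rw [div_self hσpos.ne', mul_one]
          rw [h3, h4]
          linarith [hαc]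
        · rw [if_neg hi, huNS i hi]
          have h4 : t * (1 / σ) = c := by
            rw [ht]
            calc c * σ * (1 / σ) = c * (σ / σ) := by ring
              _ = c := by rw [div_self hσpos.ne', mul_one]
          rw [h4]
          ring
      have hv''mem : v'' ∈ simplexAlpha q α := by
        refine ⟨fun i => (hv''app i) ▸ div_nonneg (hu0 i) h1t.le, ?_, fun i j => ?_⟩
        · have hall : ∀ i ∈ Finset.univ, v'' i = u i / (1 - t) := fun i _ => hv''app i
          rw [Finset.sum_congr rfl hall, ← Finset.sum_div, hsum_u, div_self h1t.ne']
        · have e1 : v'' i = u i / (1 - t) := hv''app i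
          have e2 : v'' j = u j / (1 - t) := hv''app j
          rw [e1, e2, ← mul_div_assoc]
          apply (div_le_div_iff_of_pos_right h1t).mpr
          have h5 : u i ≤ M' - c := hu_leM' i
          have h6 : m - c ≤ u j := hu_ge j
          nlinarith [hMαm, hmm']
      have hcard'' : (Finset.image v'' Finset.univ).card ≤ n + 1 := by
        have hsub : Finset.image v'' Finset.univ ⊆
            (I.erase M).image (fun a => (a - c) / (1 - t)) := by
          intro x hx
          obtain ⟨i, _, rfl⟩ := Finset.mem_image.mp hx
          by_cases hi : i ∈ S
          · apply Finset.mem_image.mpr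
            refine ⟨M', hM'mem, ?_⟩
            have e1 : v'' i = u i / (1 - t) := hv''app i
            rw [e1, huS i hi]
          · apply Finset.mem_image.mpr
            refine ⟨v i, ?_, ?_⟩
            · apply Finset.mem_erase.mpr
              exact ⟨fun h => hi ((hmemS i).mpr h),
                hvI i⟩
            · have e1 : v'' i = u i / (1 - t) := hv''app i
              rw [e1, huNS i hi]
        calc (Finset.image v'' Finset.univ).card
            ≤ ((I.erase M).image (fun a => (a - c) / (1 - t))).card := Finset.card_le_card hsub
          _ ≤ (I.erase M).card := Finset.card_image_le
          _ = I.card - 1 := Finset.card_erase_of_mem hIM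
          _ ≤ n + 1 := by omega
      obtain ⟨S'', hS''ne, hS''univ, hS''⟩ := ih v'' hcard'' hv''mem
      have hDv'' : 0 < PwD β c₂ A (PwW β v'') :=
        Pw.D_pos hq hβ0 c₂ hA (Pw.w_pos hq hα hβ0 hβ1 hv''mem)
      have hmax := Pw.ratio_convex c₁ c₂ A ht0 h1t.le (by ring) hid (hDvert S) hDv''
      rcases le_max_iff.mp hmax with h | h
      · exact ⟨S, hSne, hSuniv, h⟩
      · exact ⟨S'', hS''ne, hS''univ, le_trans h hS''⟩

end PwLemmas3
section PwLemmas4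
open Finset
variable {q : ℕ} {α β : ℝ}

set_option maxHeartbeats 2000000 in
lemma Pw.swap_bound (hq : 3 ≤ q) (hα : 1 < α) (hβ0 : 0 ≤ β) (hβ1 : β < 1)
    (c₁ c₂ : Fin q) {A : Fin q → ℝ} (hA : ∀ c, 0 < A c)
    {S : Finset (Fin q)} (hSne : S.Nonempty) (hSuniv : S ≠ Finset.univ) (hc₂S : c₂ ∈ S)
    (hN : 0 ≤ PwN β c₁ c₂ A (PwW β (PwVert q α S))) :
    ∃ S' : Finset (Fin q), S'.Nonempty ∧ c₂ ∉ S' ∧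
      PwN β c₁ c₂ A (PwW β (PwVert q α S)) / PwD β c₂ A (PwW β (PwVert q α S))
        ≤ PwN β c₁ c₂ A (PwW β (PwVert q α S')) / PwD β c₂ A (PwW β (PwVert q α S')) := by
  have hβ : 0 < 1 - β := by linarith
  obtain ⟨c, hc⟩ : ∃ c, c ∉ S := by
    by_contra h
    push_neg at h
    exact hSuniv (Finset.eq_univ_iff_forall.mpr h)
  have hcc₂ : c ≠ c₂ := fun h => hc (h ▸ hc₂S)
  set S' : Finset (Fin q) := insert c (S.erase c₂) with hS'
  have hcS'er : c ∉ S.erase c₂ := fun h => hc (Finset.mem_of_mem_erase h)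
  have hS'ne : S'.Nonempty := ⟨c, Finset.mem_insert_self c _⟩
  have hc₂S' : c₂ ∉ S' := by
    rw [hS']
    intro h
    rcases Finset.mem_insert.mp h with h | h
    · exact hcc₂ h.symm
    · exact (Finset.mem_erase.mp h).1 rfl
  have hcS' : c ∈ S' := Finset.mem_insert_self c _
  have hScard : 1 ≤ S.card := Finset.card_pos.mpr hSne
  have hcards : S'.card = S.card := by
    rw [hS', Finset.card_insert_of_notMem hcS'er, Finset.card_erase_of_mem hc₂S]
    omega
  have hmem' : ∀ c', c' ≠ c → c' ≠ c₂ → (c' ∈ S' ↔ c' ∈ S) := by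
    intro c' h1 h2
    rw [hS']
    constructor
    · intro h
      rcases Finset.mem_insert.mp h with h | h
      · exact absurd h h1
      · exact Finset.mem_of_mem_erase h
    · intro h
      exact Finset.mem_insert_of_mem (Finset.mem_erase.mpr ⟨h2, h⟩)
  set σ : ℝ := (q:ℝ) + (α - 1) * S.card with hσ
  have hσpos : 0 < σ := Pw.sigma_pos hq hα S
  have hσ' : (q:ℝ) + (α - 1) * S'.card = σ := by rw [hσ, hcards]
  set hi : ℝ := 1 - (1 - β) * (1 / σ) with hhi
  set lo : ℝ := 1 - (1 - β) * (α / σ) with hlo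
  have hvert_mem := Pw.vert_mem hq hα (S := S)
  have hvert_mem' := Pw.vert_mem hq hα (S := S')
  have hw_in : ∀ c', PwW β (PwVert q α S) c' = if c' ∈ S then lo else hi := by
    intro c'
    unfold PwW PwVert
    rw [← hσ, hlo, hhi]
    split <;> rfl
  have hw_in' : ∀ c', PwW β (PwVert q α S') c' = if c' ∈ S' then lo else hi := by
    intro c'
    unfold PwW PwVert
    rw [hcards, ← hσ, hlo, hhi]
    split <;> rfl
  have hlopos : 0 < lo := by
    have := Pw.w_pos hq hα hβ0 hβ1 hvert_mem c₂
    rw [hw_in c₂, if_pos hc₂S] at this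
    exact this
  have hhipos : 0 < hi := by
    have := Pw.w_pos hq hα hβ0 hβ1 hvert_mem c
    rw [hw_in c, if_neg hc] at this
    exact this
  have hlohi : lo ≤ hi := by
    have h1 : 1 / σ ≤ α / σ := (div_le_div_iff_of_pos_right hσpos).mpr hα.le
    rw [hlo, hhi]
    nlinarith [mul_le_mul_of_nonneg_left h1 hβ.le]
  have hDpos : 0 < PwD β c₂ A (PwW β (PwVert q α S)) :=
    Pw.D_pos hq hβ0 c₂ hA (Pw.w_pos hq hα hβ0 hβ1 hvert_mem)
  have hDpos' : 0 < PwD β c₂ A (PwW β (PwVert q α S')) :=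
    Pw.D_pos hq hβ0 c₂ hA (Pw.w_pos hq hα hβ0 hβ1 hvert_mem')
  have hcmem : c ∈ Finset.univ.erase c₂ :=
    Finset.mem_erase.mpr ⟨hcc₂, Finset.mem_univ c⟩
  set R : ℝ := ∑ c' ∈ (Finset.univ.erase c₂).erase c, A c' * PwW β (PwVert q α S) c' with hR
  have hRnn : 0 ≤ R := by
    rw [hR]
    exact Finset.sum_nonneg fun c' _ =>
      (mul_pos (hA c') (Pw.w_pos hq hα hβ0 hβ1 hvert_mem c')).le
  have hReq : ∑ c' ∈ (Finset.univ.erase c₂).erase c, A c' * PwW β (PwVert q α S') c' = R := by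
    rw [hR]
    apply Finset.sum_congr rfl
    intro c' hc'
    have h1 : c' ≠ c := (Finset.mem_erase.mp hc').1
    have h2 : c' ≠ c₂ := (Finset.mem_erase.mp (Finset.mem_of_mem_erase hc')).1
    rw [hw_in' c', hw_in c']
    rcases hmem' c' h1 h2 with ⟨hf, hg⟩
    by_cases hcs : c' ∈ S
    · rw [if_pos hcs, if_pos (hg hcs)]
    · rw [if_neg hcs, if_neg (fun hh => hcs (hf hh))]
  have hDeq : PwD β c₂ A (PwW β (PwVert q α S)) = β * (A c₂ * lo) + (R + A c * hi) := by
    unfold PwD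
    rw [← Finset.sum_erase_add _ _ hcmem, hw_in c₂, if_pos hc₂S, hw_in c, if_neg hc, ← hR]
  have hDeq' : PwD β c₂ A (PwW β (PwVert q α S')) = β * (A c₂ * hi) + (R + A c * lo) := by
    unfold PwD
    rw [← Finset.sum_erase_add _ _ hcmem, hw_in' c₂, if_neg hc₂S', hw_in' c, if_pos hcS', hReq]
  refine ⟨S', hS'ne, hc₂S', ?_⟩
  rw [div_le_div_iff₀ hDpos hDpos']
  by_cases hc₁₂ : c₁ = c₂
  · have hN0 : PwN β c₁ c₂ A (PwW β (PwVert q α S)) = 0 := by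
      unfold PwN; rw [hc₁₂]; ring
    have hN0' : PwN β c₁ c₂ A (PwW β (PwVert q α S')) = 0 := by
      unfold PwN; rw [hc₁₂]; ring
    rw [hN0, hN0', zero_mul, zero_mul]
  · by_cases hc₁c : c₁ = c
    · -- c₁ = c : the swapped colour is c₁
      have hNeq : PwN β c₁ c₂ A (PwW β (PwVert q α S))
          = (1 - β) * (A c₂ * lo - A c₁ * hi) := by
        unfold PwN
        rw [hw_in c₂, if_pos hc₂S, hw_in c₁, if_neg (hc₁c ▸ hc)]
      have hNeq' : PwN β c₁ c₂ A (PwW β (PwVert q α S'))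
          = (1 - β) * (A c₂ * hi - A c₁ * lo) := by
        unfold PwN
        rw [hw_in' c₂, if_neg hc₂S', hw_in' c₁, if_pos (hc₁c ▸ hcS')]
      rw [hNeq, hNeq', hDeq, hDeq']
      have hAc : A c = A c₁ := by rw [hc₁c]
      rw [hAc]
      nlinarith [mul_pos (hA c₁) (hA c₂), sub_nonneg.mpr hlohi, hRnn, hA c₁, hA c₂,
        mul_nonneg (mul_nonneg hβ.le (sub_nonneg.mpr hlohi))
          (mul_nonneg (mul_nonneg (mul_nonneg (by linarith : (0:ℝ) ≤ 1 + β) (hA c₁).le)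
            (hA c₂).le) (by linarith : (0:ℝ) ≤ hi + lo)),
        mul_nonneg (mul_nonneg hβ.le (sub_nonneg.mpr hlohi))
          (mul_nonneg hRnn (add_nonneg (hA c₁).le (hA c₂).le))]
    · -- c₁ ∉ {c, c₂}
      set x : ℝ := PwW β (PwVert q α S) c₁ with hx
      have hxpos : 0 < x := Pw.w_pos hq hα hβ0 hβ1 hvert_mem c₁
      have hx' : PwW β (PwVert q α S') c₁ = x := by
        rw [hx, hw_in' c₁, hw_in c₁]
        rcases hmem' c₁ hc₁c hc₁₂ with ⟨hf, hg⟩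
        by_cases hcs : c₁ ∈ S
        · rw [if_pos hcs, if_pos (hg hcs)]
        · rw [if_neg hcs, if_neg (fun hh => hcs (hf hh))]
      have hNeq : PwN β c₁ c₂ A (PwW β (PwVert q α S))
          = (1 - β) * (A c₂ * lo - A c₁ * x) := by
        unfold PwN
        rw [hw_in c₂, if_pos hc₂S, ← hx]
      have hNeq' : PwN β c₁ c₂ A (PwW β (PwVert q α S'))
          = (1 - β) * (A c₂ * hi - A c₁ * x) := by
        unfold PwN
        rw [hw_in' c₂, if_neg hc₂S', hx']
      have hNnn : 0 ≤ (1 - β) * (A c₂ * lo - A c₁ * x) := hNeq ▸ hN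
      rw [hNeq, hNeq', hDeq, hDeq']
      nlinarith [sub_nonneg.mpr hlohi, hRnn, hA c, hA c₁, hA c₂, hxpos,
        mul_nonneg (mul_nonneg (sub_nonneg.mpr hlohi) (hA c).le) hNnn,
        mul_nonneg (mul_nonneg hβ.le (sub_nonneg.mpr hlohi))
          (mul_nonneg (hA c₂).le (add_nonneg (mul_nonneg (hA c).le hhipos.le) hRnn)),
        mul_nonneg (mul_nonneg hβ.le (sub_nonneg.mpr hlohi))
          (mul_nonneg (mul_nonneg (mul_nonneg hβ0 (hA c₁).le) (hA c₂).le) hxpos.le)]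

end PwLemmas4
section PwLemmas5
open Finset

lemma Pw.hfun_eq_one {q d : ℕ} {β : ℝ} (c₁ c₂ : Fin q) (p : Fin d → Fin q → ℝ)
    (h1 : ∀ k, p k c₁ = p k c₂) : hfun q d β c₁ c₂ p = 1 := by
  have hg : gfun q d β c₁ c₂ p = 1 := by
    unfold gfun
    apply Finset.prod_eq_one
    intro k _
    rw [h1 k]
    simp
  unfold hfun
  rw [hg]
  simp

set_option maxHeartbeats 1000000 in
lemma Pw.improve_all {q d : ℕ} {α β : ℝ} (hq : 3 ≤ q) (hα : 1 < α) (hβ0 : 0 ≤ β)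
    (hβ1 : β < 1) (c₁ c₂ : Fin q) (hc₁₂ : c₁ ≠ c₂) (T : Finset (Fin d)) :
    ∀ p : Fin d → Fin q → ℝ, (∀ k, p k ∈ simplexAlpha q α) → 1 ≤ hfun q d β c₁ c₂ p →
    ∃ p' : Fin d → Fin q → ℝ, (∀ k, p' k ∈ simplexAlpha q α) ∧
      (∀ k ∈ T, ∃ S : Finset (Fin q), S.Nonempty ∧ c₂ ∉ S ∧ p' k = PwVert q α S) ∧
      hfun q d β c₁ c₂ p ≤ hfun q d β c₁ c₂ p' := by
  induction T using Finset.induction_on with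
  | empty =>
    intro p hp hH
    exact ⟨p, hp, by simp, le_refl _⟩
  | @insert k T hk ih =>
    intro p hp hH
    obtain ⟨p', hp', hext, hle⟩ := ih p hp hH
    set A : Fin q → ℝ := fun c => ∏ k' ∈ Finset.univ.erase k, PwW β (p' k') c with hAdef
    have hA : ∀ c, 0 < A c := fun c =>
      Finset.prod_pos fun k' _ => Pw.w_pos hq hα hβ0 hβ1 (hp' k') c
    have hfp' : hfun q d β c₁ c₂ p'
        = 1 + PwN β c₁ c₂ A (PwW β (p' k)) / PwD β c₂ A (PwW β (p' k)) := by
      have := Pw.hfun_update hq hα hβ0 hβ1 c₁ c₂ p' k (fun k' _ => hp' k') (hp' k)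
      rwa [Function.update_eq_self] at this
    have hr0 : 0 ≤ PwN β c₁ c₂ A (PwW β (p' k)) / PwD β c₂ A (PwW β (p' k)) := by
      have h2 : 1 ≤ hfun q d β c₁ c₂ p' := le_trans hH hle
      rw [hfp'] at h2
      linarith
    obtain ⟨S₀, hS₀ne, hS₀univ, hratio⟩ :=
      Pw.coord_bound hq hα hβ0 hβ1 c₁ c₂ hA ((Finset.image (p' k) Finset.univ).card)
        (p' k) (by omega) (hp' k)
    have hr1 : 0 ≤ PwN β c₁ c₂ A (PwW β (PwVert q α S₀))
        / PwD β c₂ A (PwW β (PwVert q α S₀)) := le_trans hr0 hratio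
    have hD₀ : 0 < PwD β c₂ A (PwW β (PwVert q α S₀)) :=
      Pw.D_pos hq hβ0 c₂ hA (Pw.w_pos hq hα hβ0 hβ1 (Pw.vert_mem hq hα S₀))
    have hNnn : 0 ≤ PwN β c₁ c₂ A (PwW β (PwVert q α S₀)) := by
      have heq : PwN β c₁ c₂ A (PwW β (PwVert q α S₀))
          = (PwN β c₁ c₂ A (PwW β (PwVert q α S₀))
              / PwD β c₂ A (PwW β (PwVert q α S₀))) * PwD β c₂ A (PwW β (PwVert q α S₀)) := by
        field_simp
      rw [heq]
      exact mul_nonneg hr1 hD₀.le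
    obtain ⟨S₁, hS₁ne, hc₂S₁, hchain⟩ : ∃ S₁ : Finset (Fin q), S₁.Nonempty ∧ c₂ ∉ S₁ ∧
        PwN β c₁ c₂ A (PwW β (p' k)) / PwD β c₂ A (PwW β (p' k))
          ≤ PwN β c₁ c₂ A (PwW β (PwVert q α S₁)) / PwD β c₂ A (PwW β (PwVert q α S₁)) := by
      by_cases hc₂S₀ : c₂ ∈ S₀
      · obtain ⟨S₁, h1, h2, h3⟩ :=
          Pw.swap_bound hq hα hβ0 hβ1 c₁ c₂ hA hS₀ne hS₀univ hc₂S₀ hNnn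
        exact ⟨S₁, h1, h2, le_trans hratio h3⟩
      · exact ⟨S₀, hS₀ne, hc₂S₀, hratio⟩
    refine ⟨Function.update p' k (PwVert q α S₁), ?_, ?_, ?_⟩
    · intro k'
      rcases eq_or_ne k' k with rfl | hne
      · rw [Function.update_self]; exact Pw.vert_mem hq hα S₁
      · rw [Function.update_of_ne hne]; exact hp' k'
    · intro k' hk'
      rcases Finset.mem_insert.mp hk' with rfl | hk'T
      · exact ⟨S₁, hS₁ne, hc₂S₁, Function.update_self k' (PwVert q α S₁) p'⟩
      · have hne : k' ≠ k := fun h => hk (h ▸ hk'T)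
        obtain ⟨S, h1, h2, h3⟩ := hext k' hk'T
        exact ⟨S, h1, h2, by rw [Function.update_of_ne hne]; exact h3⟩
    · have hfp'' : hfun q d β c₁ c₂ (Function.update p' k (PwVert q α S₁))
          = 1 + PwN β c₁ c₂ A (PwW β (PwVert q α S₁))
              / PwD β c₂ A (PwW β (PwVert q α S₁)) :=
        Pw.hfun_update hq hα hβ0 hβ1 c₁ c₂ p' k (fun k' _ => hp' k') (Pw.vert_mem hq hα S₁)
      rw [hfp'']
      rw [hfp'] at hle
      linarith

end PwLemmas5
/-- For any colours `c₁, c₂ ∈ [q]`, there is an `(α,c₂)`-extremal tuple in `Δ_α^d`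
achieving the maximum of `h_{c₁,c₂,β}` over `Δ_α^d`. -/
theorem exists_extremal_maximiser (q d : ℕ) (hq : 3 ≤ q) (hd : 2 ≤ d)
    (β : ℝ) (hβ0 : 0 ≤ β) (hβ1 : β < 1) (α : ℝ) (hα : 1 < α) (c₁ c₂ : Fin q) :
    ∃ p : Fin d → Fin q → ℝ,
      (∀ k, p k ∈ simplexAlpha q α) ∧
      (∀ k : Fin d,
        (∀ c' : Fin q, p k c' = p k c₂ ∨ p k c' = α * p k c₂) ∧
        (∃ c' : Fin q, p k c' = α * p k c₂)) ∧
      (∀ p' : Fin d → Fin q → ℝ, (∀ k, p' k ∈ simplexAlpha q α) →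
        hfun q d β c₁ c₂ p' ≤ hfun q d β c₁ c₂ p) := by
  classical
  haveI : Nontrivial (Fin q) := Fin.nontrivial_iff_two_le.mpr (by omega)
  -- extremality of vertex tuples
  have hvert_ext : ∀ S : Finset (Fin q), S.Nonempty → c₂ ∉ S →
      (∀ c' : Fin q, PwVert q α S c' = PwVert q α S c₂ ∨
        PwVert q α S c' = α * PwVert q α S c₂) ∧
      (∃ c' : Fin q, PwVert q α S c' = α * PwVert q α S c₂) := by
    intro S hSne hc₂S
    have hc₂ : PwVert q α S c₂ = 1 / ((q : ℝ) + (α - 1) * S.card) := by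
      unfold PwVert; rw [if_neg hc₂S]
    constructor
    · intro c'
      by_cases hc' : c' ∈ S
      · right
        unfold PwVert
        rw [if_pos hc', if_neg hc₂S, mul_one_div]
      · left
        unfold PwVert
        rw [if_neg hc', if_neg hc₂S]
    · obtain ⟨c', hc'⟩ := hSne
      refine ⟨c', ?_⟩
      unfold PwVert
      rw [if_pos hc', if_neg hc₂S, mul_one_div]
  by_cases hc₁₂ : c₁ = c₂
  · -- degenerate case : hfun is identically 1
    obtain ⟨c₃, hc₃⟩ := exists_ne c₂
    have hS : ({c₃} : Finset (Fin q)).Nonempty := ⟨c₃, Finset.mem_singleton_self c₃⟩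
    have hc₂S : c₂ ∉ ({c₃} : Finset (Fin q)) := by
      simp [Finset.mem_singleton]
      exact fun h => hc₃ h.symm
    refine ⟨fun _ => PwVert q α {c₃}, fun k => Pw.vert_mem hq hα _,
      fun k => hvert_ext {c₃} hS hc₂S, ?_⟩
    intro p' hp'
    rw [Pw.hfun_eq_one c₁ c₂ p' (fun k => by rw [hc₁₂]),
      Pw.hfun_eq_one c₁ c₂ _ (fun k => by rw [hc₁₂])]
  · -- main case
    obtain ⟨c₃, hc₃⟩ : ∃ c₃ : Fin q, c₃ ∉ ({c₁, c₂} : Finset (Fin q)) := by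
      have h2 : ({c₁, c₂} : Finset (Fin q)).card ≤ 2 := Finset.card_insert_le c₁ {c₂} |>.trans
        (by simp)
      have hne : (Finset.univ \ ({c₁, c₂} : Finset (Fin q))).Nonempty := by
        rw [← Finset.card_pos, Finset.card_sdiff_of_subset (Finset.subset_univ _), Finset.card_univ,
          Fintype.card_fin]
        omega
      obtain ⟨c₃, hc₃⟩ := hne
      exact ⟨c₃, (Finset.mem_sdiff.mp hc₃).2⟩
    have hc₃₁ : c₃ ≠ c₁ := fun h => hc₃ (by simp [h])
    have hc₃₂ : c₃ ≠ c₂ := fun h => hc₃ (by simp [h])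
    set e₀ : Fin d → Fin q → ℝ := fun _ => PwVert q α {c₃} with he₀
    have he₀_one : hfun q d β c₁ c₂ e₀ = 1 := by
      apply Pw.hfun_eq_one
      intro k
      show PwVert q α {c₃} c₁ = PwVert q α {c₃} c₂
      unfold PwVert
      rw [if_neg (by simp [Finset.mem_singleton]; exact fun h => hc₃₁ h.symm),
        if_neg (by simp [Finset.mem_singleton]; exact fun h => hc₃₂ h.symm)]
    set E : Finset (Fin d → Fin q → ℝ) :=
      (Finset.univ : Finset (Fin d → {S : Finset (Fin q) // S.Nonempty ∧ c₂ ∉ S})).image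
        (fun f => fun k => PwVert q α (f k).1) with hE
    have hf₀ : ∀ S : Finset (Fin q), S.Nonempty → c₂ ∉ S →
        (fun _ : Fin d => PwVert q α S) ∈ E := by
      intro S h1 h2
      rw [hE]
      exact Finset.mem_image.mpr ⟨fun _ => ⟨S, h1, h2⟩, Finset.mem_univ _, rfl⟩
    have hc₂S₃ : c₂ ∉ ({c₃} : Finset (Fin q)) := by
      simp [Finset.mem_singleton]
      exact fun h => hc₃₂ h.symm
    have hS₃ne : ({c₃} : Finset (Fin q)).Nonempty := ⟨c₃, Finset.mem_singleton_self c₃⟩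
    have he₀E : e₀ ∈ E := hf₀ {c₃} hS₃ne hc₂S₃
    have hEne : E.Nonempty := ⟨e₀, he₀E⟩
    obtain ⟨e, heE, hemax⟩ := Finset.exists_max_image E (hfun q d β c₁ c₂) hEne
    obtain ⟨f, _, rfl⟩ := Finset.mem_image.mp heE
    refine ⟨fun k => PwVert q α (f k).1, fun k => Pw.vert_mem hq hα _,
      fun k => hvert_ext (f k).1 (f k).2.1 (f k).2.2, ?_⟩
    intro p' hp'
    rcases le_or_gt (hfun q d β c₁ c₂ p') 1 with h | h
    · calc hfun q d β c₁ c₂ p' ≤ 1 := h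
        _ = hfun q d β c₁ c₂ e₀ := he₀_one.symm
        _ ≤ _ := hemax e₀ he₀E
    · obtain ⟨p'', hp''mem, hext, hle⟩ :=
        Pw.improve_all hq hα hβ0 hβ1 c₁ c₂ hc₁₂ Finset.univ p' hp' h.le
      have hext' : ∀ k, ∃ S : Finset (Fin q), S.Nonempty ∧ c₂ ∉ S ∧ p'' k = PwVert q α S :=
        fun k => hext k (Finset.mem_univ k)
      choose Sf h1 h2 h3 using hext'
      have hp''eq : p'' = fun k => PwVert q α ((fun k => (⟨Sf k, h1 k, h2 k⟩ :
          {S : Finset (Fin q) // S.Nonempty ∧ c₂ ∉ S})) k).1 := funext h3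
      have hp''E : p'' ∈ E := by
        rw [hE, hp''eq]
        exact Finset.mem_image.mpr ⟨_, Finset.mem_univ _, rfl⟩
      exact le_trans hle (hemax p'' hp''E)
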